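/- Assume the nozzle geometry and the 2D CGO function, with parameters additionally satisfying 1 ≤ s, s·ε ≤ 1, and ε ≤ s·ε^l ≤ 1. Let T > 0 and [T₁, T₂] ⊆ [0, T] with T₂ − T₁ = ε². Let α₄ ∈ (0, 1), C₄ > 0, and let w : D̄_ε × [T₁, T₂] → ℂ be continuously differentiable in (x, t), satisfy a parabolic C^{1,α₄} bound with constant C₄, and vanish on the lower graph boundary: w(x₁, γ(x₁), t) = 0 for all x₁ ∈ [0, ε^l] and t ∈ [T₁, T₂]. Define I₁ = μ∫_{T₁}^{T₂} [ ∫_{γ(ε^l)}^{γ(ε^l)+ε} (w·∂₁u₀ − u₀·∂₁w)(ε^l, x₂, t) dx₂ − ∫_0^ε (w·∂₁u₀ − u₀·∂₁w)(0, x₂, t) dx₂ ] dt. Then there exists a constant C > 0, depending only on μ, λ, T and C₄ (in particular independent of ε, s, l, γ), such that |I₁| ≤ C·( s²ε^{3+l} + s²ε^{2+l+(1+α₄)l₀} + ε^{2+α₄ l₀} + s³ε^{3+2l} + s·ε^{3+α₄ l₀} ). -/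

import Mathlib

noncomputable section

/-- Partial derivative in the first spatial variable. -/
def pd1 (f : ℝ → ℝ → ℝ → ℂ) (x₁ x₂ t : ℝ) : ℂ := deriv (fun y => f y x₂ t) x₁

/-- Partial derivative in the second spatial variable. -/
def pd2 (f : ℝ → ℝ → ℝ → ℂ) (x₁ x₂ t : ℝ) : ℂ := deriv (fun y => f x₁ y t) x₂

/-- Partial derivative in time. -/
def pdt (f : ℝ → ℝ → ℝ → ℂ) (x₁ x₂ t : ℝ) : ℂ := deriv (fun τ => f x₁ x₂ τ) t

/-- Spatial Laplacian `Δ = ∂₁² + ∂₂²`. -/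
def lap (f : ℝ → ℝ → ℝ → ℂ) (x₁ x₂ t : ℝ) : ℂ :=
  pd1 (pd1 f) x₁ x₂ t + pd2 (pd2 f) x₁ x₂ t

/-- The 2D complex geometric optics function
`u₀(x,t) = exp(μ^{-1/2}((s d₁ + i√(s²+λ) d₂) x₁ + (s d₂ − i√(s²+λ) d₁) x₂) + λ t)`. -/
def cgo2 (μ lam s d₁ d₂ : ℝ) (x₁ x₂ t : ℝ) : ℂ :=
  Complex.exp (((Real.sqrt μ : ℝ) : ℂ)⁻¹ *
      (((s : ℂ) * (d₁ : ℂ) + Complex.I * ((Real.sqrt (s ^ 2 + lam) : ℝ) : ℂ) * (d₂ : ℂ)) *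
          (x₁ : ℂ) +
        ((s : ℂ) * (d₂ : ℂ) - Complex.I * ((Real.sqrt (s ^ 2 + lam) : ℝ) : ℂ) * (d₁ : ℂ)) *
          (x₂ : ℂ)) +
    (lam : ℂ) * (t : ℂ))

/-- The parabolic distance `ρ = ‖x − y‖ + |t − τ|^{1/2}` in two space dimensions. -/
def prho (x₁ x₂ t y₁ y₂ τ : ℝ) : ℝ :=
  Real.sqrt ((x₁ - y₁) ^ 2 + (x₂ - y₂) ^ 2) + Real.sqrt |t - τ|

/-- Euclidean norm of the spatial gradient of `w`. -/
def gradNorm (w : ℝ → ℝ → ℝ → ℂ) (x₁ x₂ t : ℝ) : ℝ :=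
  Real.sqrt (‖pd1 w x₁ x₂ t‖ ^ 2 + ‖pd2 w x₁ x₂ t‖ ^ 2)

/-- The closed nozzle space–time cylinder
`D̄_ε × [T₁,T₂]`, `D_ε = {0 ≤ x₁ ≤ ε^l, γ(x₁) ≤ x₂ ≤ γ(x₁)+ε}`. -/
def nozzleCyl (ε l T₁ T₂ : ℝ) (γ : ℝ → ℝ) : Set (ℝ × ℝ × ℝ) :=
  {p : ℝ × ℝ × ℝ | p.1 ∈ Set.Icc 0 (ε ^ l) ∧ p.2.1 ∈ Set.Icc (γ p.1) (γ p.1 + ε) ∧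
    p.2.2 ∈ Set.Icc T₁ T₂}

/-- Parabolic `C^{1,α}` bound with constant `C` on the set `S`. -/
structure ParabolicC1 (w : ℝ → ℝ → ℝ → ℂ) (S : Set (ℝ × ℝ × ℝ)) (C α : ℝ) : Prop where
  bdd : ∀ p ∈ S, ‖w p.1 p.2.1 p.2.2‖ ≤ C
  grad_bdd : ∀ p ∈ S, gradNorm w p.1 p.2.1 p.2.2 ≤ C
  time_bdd : ∀ p ∈ S, ‖pdt w p.1 p.2.1 p.2.2‖ ≤ C
  lip : ∀ p ∈ S, ∀ q ∈ S,
    ‖w p.1 p.2.1 p.2.2 - w q.1 q.2.1 q.2.2‖ ≤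
      C * prho p.1 p.2.1 p.2.2 q.1 q.2.1 q.2.2
  grad_holder : ∀ p ∈ S, ∀ q ∈ S,
    Real.sqrt (‖pd1 w p.1 p.2.1 p.2.2 - pd1 w q.1 q.2.1 q.2.2‖ ^ 2 +
        ‖pd2 w p.1 p.2.1 p.2.2 - pd2 w q.1 q.2.1 q.2.2‖ ^ 2) ≤
      C * prho p.1 p.2.1 p.2.2 q.1 q.2.1 q.2.2 ^ α
  taylor : ∀ p ∈ S, ∀ q ∈ S,
    ‖w p.1 p.2.1 p.2.2 - w q.1 q.2.1 q.2.2
        - pd1 w q.1 q.2.1 q.2.2 * ((p.1 - q.1 : ℝ) : ℂ)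
        - pd2 w q.1 q.2.1 q.2.2 * ((p.2.1 - q.2.1 : ℝ) : ℂ)
        - pdt w q.1 q.2.1 q.2.2 * ((p.2.2 - q.2.2 : ℝ) : ℂ)‖ ≤
      C * prho p.1 p.2.1 p.2.2 q.1 q.2.1 q.2.2 ^ (1 + α)

/-- `w` is (jointly) continuously differentiable in `(x,t)` on the set `S`. -/
structure SmoothC1 (w : ℝ → ℝ → ℝ → ℂ) (S : Set (ℝ × ℝ × ℝ)) : Prop where
  cont : ContinuousOn (fun p : ℝ × ℝ × ℝ => w p.1 p.2.1 p.2.2) S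
  jdiff : ∀ p ∈ S, DifferentiableAt ℝ (fun q : ℝ × ℝ × ℝ => w q.1 q.2.1 q.2.2) p
  cont1 : ContinuousOn (fun p : ℝ × ℝ × ℝ => pd1 w p.1 p.2.1 p.2.2) S
  cont2 : ContinuousOn (fun p : ℝ × ℝ × ℝ => pd2 w p.1 p.2.1 p.2.2) S
  contt : ContinuousOn (fun p : ℝ × ℝ × ℝ => pdt w p.1 p.2.1 p.2.2) S

/-- Auxiliary: bound on the modulus of a complex exponential via the modulus of the exponent. -/
lemma abs_cexp_le_of_abs_le (z : ℂ) {R : ℝ} (h : ‖z‖ ≤ R) :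
    ‖Complex.exp z‖ ≤ Real.exp R := by
  rw [Complex.norm_exp]
  exact Real.exp_le_exp.2 ((Complex.re_le_norm z).trans h)

/-- Auxiliary: explicit formula for `∂₁` of the CGO function. -/
lemma pd1_cgo2_formula (μ lam s d₁ d₂ x₁ x₂ t : ℝ) :
    pd1 (cgo2 μ lam s d₁ d₂) x₁ x₂ t =
      ((Real.sqrt μ : ℝ) : ℂ)⁻¹ *
        ((s : ℂ) * (d₁ : ℂ) + Complex.I * ((Real.sqrt (s ^ 2 + lam) : ℝ) : ℂ) * (d₂ : ℂ)) *
        cgo2 μ lam s d₁ d₂ x₁ x₂ t := by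
  set c : ℂ := ((Real.sqrt μ : ℝ) : ℂ)⁻¹
  set A : ℂ := (s : ℂ) * (d₁ : ℂ) + Complex.I * ((Real.sqrt (s ^ 2 + lam) : ℝ) : ℂ) * (d₂ : ℂ)
  set B : ℂ := (s : ℂ) * (d₂ : ℂ) - Complex.I * ((Real.sqrt (s ^ 2 + lam) : ℝ) : ℂ) * (d₁ : ℂ)
  have h0 : HasDerivAt (fun y : ℝ => (y : ℂ)) 1 x₁ := by
    simpa using (hasDerivAt_id x₁).ofReal_comp
  have h1 := (((h0.const_mul A).add_const (B * (x₂ : ℂ))).const_mul c).add_const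
    ((lam : ℂ) * (t : ℂ))
  have h2 := h1.cexp
  unfold pd1 cgo2
  rw [h2.deriv]
  ring

/-- Auxiliary: parabolic distance between two points on the same vertical line at equal times. -/
lemma prho_vert (x₁ x₂ t y₂ : ℝ) : prho x₁ x₂ t x₁ y₂ t = |x₂ - y₂| := by
  simp [prho, Real.sqrt_sq_eq_abs]

/-- Auxiliary: `|∂₁ w| ≤ gradNorm w`. -/
lemma abs_pd1_le_gradNorm (w : ℝ → ℝ → ℝ → ℂ) (x₁ x₂ t : ℝ) :
    ‖pd1 w x₁ x₂ t‖ ≤ gradNorm w x₁ x₂ t := by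
  have h := Real.sqrt_le_sqrt
    (le_add_of_nonneg_right (sq_nonneg (‖pd2 w x₁ x₂ t‖)) :
      ‖pd1 w x₁ x₂ t‖ ^ 2 ≤ _)
  calc ‖pd1 w x₁ x₂ t‖
      = Real.sqrt (‖pd1 w x₁ x₂ t‖ ^ 2) := (Real.sqrt_sq (norm_nonneg _)).symm
    _ ≤ gradNorm w x₁ x₂ t := h


set_option maxHeartbeats 2000000 in
/-- **Boundary-term estimate (Lemma 3.4).**
`I₁`, the lateral CGO boundary integral over the vertical cross-sections
`Γ₂ = {0}×[0,ε]` and `Γ₄ = {ε^l}×[γ(ε^l), γ(ε^l)+ε]` of the nozzle, is bounded by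
`C (s²ε^{3+l} + s²ε^{2+l+(1+α₄)l₀} + ε^{2+α₄l₀} + s³ε^{3+2l} + s ε^{3+α₄l₀})`,
with `C` depending only on `μ, λ, T, C₄`. -/
theorem boundary_term_estimate_I1
    (μ lam T C₄ α₄ : ℝ) (hμ : 0 < μ) (hlam : 0 < lam) (hT : 0 < T)
    (hC₄ : 0 < C₄) (hα₄ : α₄ ∈ Set.Ioo (0:ℝ) 1) :
    ∃ C > 0, ∀ (ε l s d₁ d₂ T₁ T₂ : ℝ) (γ : ℝ → ℝ) (w : ℝ → ℝ → ℝ → ℂ),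
      ε ∈ Set.Ioo (0:ℝ) 1 → 0 < l →
      ContDiffOn ℝ 2 γ (Set.Icc 0 (ε ^ l)) → γ 0 = 0 →
      derivWithin γ (Set.Icc 0 (ε ^ l)) 0 = 0 →
      (∀ x ∈ Set.Icc (0:ℝ) (ε ^ l), |γ x| ≤ ε) →
      d₁ < 0 → d₂ < 0 → d₁ ^ 2 + d₂ ^ 2 = 1 →
      1 ≤ s → s * ε ≤ 1 → ε ≤ s * ε ^ l → s * ε ^ l ≤ 1 →
      0 ≤ T₁ → T₂ ≤ T → T₂ - T₁ = ε ^ 2 →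
      SmoothC1 w (nozzleCyl ε l T₁ T₂ γ) →
      ParabolicC1 w (nozzleCyl ε l T₁ T₂ γ) C₄ α₄ →
      (∀ x₁ ∈ Set.Icc (0:ℝ) (ε ^ l), ∀ t ∈ Set.Icc T₁ T₂, w x₁ (γ x₁) t = 0) →
      ‖(μ : ℂ) * ∫ t in T₁..T₂,
          ((∫ x₂ in (γ (ε ^ l))..(γ (ε ^ l) + ε),
              (w (ε ^ l) x₂ t * pd1 (cgo2 μ lam s d₁ d₂) (ε ^ l) x₂ t
                - cgo2 μ lam s d₁ d₂ (ε ^ l) x₂ t * pd1 w (ε ^ l) x₂ t))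
            - ∫ x₂ in (0:ℝ)..ε,
              (w 0 x₂ t * pd1 (cgo2 μ lam s d₁ d₂) 0 x₂ t
                - cgo2 μ lam s d₁ d₂ 0 x₂ t * pd1 w 0 x₂ t))‖
        ≤ C * (s ^ 2 * ε ^ (3 + l) + s ^ 2 * ε ^ (2 + l + (1 + α₄) * min l 1)
            + ε ^ (2 + α₄ * min l 1) + s ^ 3 * ε ^ (3 + 2 * l)
            + s * ε ^ (3 + α₄ * min l 1)) := by
  set K : ℝ := (Real.sqrt μ)⁻¹ * (2 + Real.sqrt lam) with hKdef
  set M : ℝ := Real.exp ((Real.sqrt μ)⁻¹ * (6 + 3 * Real.sqrt lam) + lam * T) with hMdef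
  have hsqμ : 0 < Real.sqrt μ := Real.sqrt_pos.2 hμ
  have hsqlam : 0 ≤ Real.sqrt lam := Real.sqrt_nonneg lam
  have hKpos : 0 < K := by positivity
  have hMpos : 0 < M := Real.exp_pos _
  refine ⟨2 * μ * C₄ * M * (K + 1), by positivity, ?_⟩
  intro ε l s d₁ d₂ T₁ T₂ γ w hε hl _hγC2 hγ0 _hγ'0 hγb hd₁ hd₂ hd hs hsε hεs hsεl
    hT₁ hT₂ hT21 _hsm hpar hw0
  obtain ⟨hε0, hε1⟩ := hε
  have hs0 : (0:ℝ) < s := lt_of_lt_of_le one_pos hs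
  have hεl0 : (0:ℝ) < ε ^ l := Real.rpow_pos_of_pos hε0 l
  have hεl1 : ε ^ l ≤ 1 := Real.rpow_le_one hε0.le hε1.le hl.le
  have hT₁T₂ : T₁ ≤ T₂ := by linarith [sq_nonneg ε, hT21]
  have hT₂T : T₂ ≤ T := hT₂
  have hT₁0 : 0 ≤ T₁ := hT₁
  have hd₁' : |d₁| ≤ 1 := by
    rw [← sq_le_one_iff_abs_le_one]
    nlinarith [sq_nonneg d₂]
  have hd₂' : |d₂| ≤ 1 := by
    rw [← sq_le_one_iff_abs_le_one]
    nlinarith [sq_nonneg d₁]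
  set S := nozzleCyl ε l T₁ T₂ γ with hS
  set u := cgo2 μ lam s d₁ d₂ with hu
  set c : ℂ := ((Real.sqrt μ : ℝ) : ℂ)⁻¹ with hc
  set A : ℂ := (s : ℂ) * (d₁ : ℂ) + Complex.I * ((Real.sqrt (s ^ 2 + lam) : ℝ) : ℂ) * (d₂ : ℂ)
    with hA
  set B : ℂ := (s : ℂ) * (d₂ : ℂ) - Complex.I * ((Real.sqrt (s ^ 2 + lam) : ℝ) : ℂ) * (d₁ : ℂ)
    with hB
  -- basic bounds on the coefficients
  have hsqrt_add : Real.sqrt (s ^ 2 + lam) ≤ s + Real.sqrt lam := by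
    have h1 : s ^ 2 + lam ≤ (s + Real.sqrt lam) ^ 2 := by
      nlinarith [Real.sq_sqrt hlam.le, Real.sqrt_nonneg lam]
    calc Real.sqrt (s ^ 2 + lam) ≤ Real.sqrt ((s + Real.sqrt lam) ^ 2) := Real.sqrt_le_sqrt h1
      _ = s + Real.sqrt lam := Real.sqrt_sq (by positivity)
  have habsA : ‖A‖ ≤ 2 * s + Real.sqrt lam := by
    calc ‖A‖
        ≤ ‖(s : ℂ) * (d₁ : ℂ)‖ +
            ‖Complex.I * ((Real.sqrt (s ^ 2 + lam) : ℝ) : ℂ) * (d₂ : ℂ)‖ :=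
          norm_add_le _ _
      _ = s * |d₁| + Real.sqrt (s ^ 2 + lam) * |d₂| := by
          simp [norm_mul, Complex.norm_real, Complex.norm_I, abs_of_nonneg hs0.le,
            abs_of_nonneg (Real.sqrt_nonneg (s ^ 2 + lam))]
      _ ≤ 2 * s + Real.sqrt lam := by
          have e1 : s * |d₁| ≤ s * 1 := mul_le_mul_of_nonneg_left hd₁' hs0.le
          have e2 : Real.sqrt (s ^ 2 + lam) * |d₂| ≤ (s + Real.sqrt lam) * 1 :=
            mul_le_mul hsqrt_add hd₂' (abs_nonneg _) (by positivity)
          linarith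
  have habsB : ‖B‖ ≤ 2 * s + Real.sqrt lam := by
    calc ‖B‖
        ≤ ‖(s : ℂ) * (d₂ : ℂ)‖ +
            ‖Complex.I * ((Real.sqrt (s ^ 2 + lam) : ℝ) : ℂ) * (d₁ : ℂ)‖ := by
          rw [hB]
          exact norm_sub_le _ _
      _ = s * |d₂| + Real.sqrt (s ^ 2 + lam) * |d₁| := by
          simp [norm_mul, Complex.norm_real, Complex.norm_I, abs_of_nonneg hs0.le,
            abs_of_nonneg (Real.sqrt_nonneg (s ^ 2 + lam))]
      _ ≤ 2 * s + Real.sqrt lam := by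
          have e1 : s * |d₂| ≤ s * 1 := mul_le_mul_of_nonneg_left hd₂' hs0.le
          have e2 : Real.sqrt (s ^ 2 + lam) * |d₁| ≤ (s + Real.sqrt lam) * 1 :=
            mul_le_mul hsqrt_add hd₁' (abs_nonneg _) (by positivity)
          linarith
  have habsc : ‖c‖ = (Real.sqrt μ)⁻¹ := by
    rw [hc, norm_inv, Complex.norm_real, Real.norm_eq_abs, abs_of_nonneg hsqμ.le]
  -- bound on |u₀| on the cylinder
  have habs_u : ∀ x₁ x₂ t : ℝ, |x₁| ≤ ε ^ l → |x₂| ≤ 2 * ε → 0 ≤ t → t ≤ T →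
      ‖u x₁ x₂ t‖ ≤ M := by
    intro x₁ x₂ t hx₁ hx₂ ht0 htT
    rw [hu]
    unfold cgo2
    apply abs_cexp_le_of_abs_le
    have hzb : ‖c * (A * (x₁ : ℂ) + B * (x₂ : ℂ)) + (lam : ℂ) * (t : ℂ)‖ ≤
        (Real.sqrt μ)⁻¹ * ((2 * s + Real.sqrt lam) * (ε ^ l) +
          (2 * s + Real.sqrt lam) * (2 * ε)) + lam * T := by
      calc ‖c * (A * (x₁ : ℂ) + B * (x₂ : ℂ)) + (lam : ℂ) * (t : ℂ)‖
          ≤ ‖c * (A * (x₁ : ℂ) + B * (x₂ : ℂ))‖ +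
              ‖(lam : ℂ) * (t : ℂ)‖ := norm_add_le _ _
        _ = ‖c‖ * ‖A * (x₁ : ℂ) + B * (x₂ : ℂ)‖ + lam * |t| := by
            simp [norm_mul, Complex.norm_real, abs_of_nonneg hlam.le]
        _ ≤ (Real.sqrt μ)⁻¹ * (‖A‖ * |x₁| + ‖B‖ * |x₂|) + lam * T := by
            rw [habsc]
            gcongr
            · calc ‖A * (x₁ : ℂ) + B * (x₂ : ℂ)‖
                  ≤ ‖A * (x₁ : ℂ)‖ + ‖B * (x₂ : ℂ)‖ :=
                    norm_add_le _ _
                _ = ‖A‖ * |x₁| + ‖B‖ * |x₂| := by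
                    simp [norm_mul, Complex.norm_real]
            · rw [abs_of_nonneg ht0]; exact htT
        _ ≤ (Real.sqrt μ)⁻¹ * ((2 * s + Real.sqrt lam) * (ε ^ l) +
              (2 * s + Real.sqrt lam) * (2 * ε)) + lam * T := by
            gcongr <;> first
              | exact habsA
              | exact habsB
              | positivity
    refine hzb.trans ?_
    have h1 : (2 * s + Real.sqrt lam) * (ε ^ l) ≤ 2 + Real.sqrt lam := by
      have : (2 * s + Real.sqrt lam) * (ε ^ l) = 2 * (s * ε ^ l) + Real.sqrt lam * ε ^ l := by
        ring
      rw [this]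
      have e1 : Real.sqrt lam * ε ^ l ≤ Real.sqrt lam * 1 :=
        mul_le_mul_of_nonneg_left hεl1 hsqlam
      linarith
    have h2 : (2 * s + Real.sqrt lam) * (2 * ε) ≤ 4 + 2 * Real.sqrt lam := by
      have : (2 * s + Real.sqrt lam) * (2 * ε) = 4 * (s * ε) + 2 * (Real.sqrt lam * ε) := by
        ring
      rw [this]
      have e1 : Real.sqrt lam * ε ≤ Real.sqrt lam * 1 :=
        mul_le_mul_of_nonneg_left hε1.le hsqlam
      linarith
    have e3 := mul_le_mul_of_nonneg_left (add_le_add h1 h2) (inv_nonneg.2 hsqμ.le)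
    linarith
  -- bound on |∂₁ u₀|
  have habs_pd1u : ∀ x₁ x₂ t : ℝ, |x₁| ≤ ε ^ l → |x₂| ≤ 2 * ε → 0 ≤ t → t ≤ T →
      ‖pd1 u x₁ x₂ t‖ ≤ K * s * M := by
    intro x₁ x₂ t hx₁ hx₂ ht0 htT
    rw [hu, pd1_cgo2_formula]
    rw [norm_mul, norm_mul]
    have h1 : ‖((Real.sqrt μ : ℝ) : ℂ)⁻¹‖ = (Real.sqrt μ)⁻¹ := habsc
    rw [h1]
    have h2 : ‖(s : ℂ) * (d₁ : ℂ) +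
        Complex.I * ((Real.sqrt (s ^ 2 + lam) : ℝ) : ℂ) * (d₂ : ℂ)‖ ≤ (2 + Real.sqrt lam) * s := by
      refine habsA.trans ?_
      have e1 : Real.sqrt lam * 1 ≤ Real.sqrt lam * s := mul_le_mul_of_nonneg_left hs hsqlam
      linarith
    have h3 := habs_u x₁ x₂ t hx₁ hx₂ ht0 htT
    calc (Real.sqrt μ)⁻¹ * ‖(s : ℂ) * (d₁ : ℂ) +
          Complex.I * ((Real.sqrt (s ^ 2 + lam) : ℝ) : ℂ) * (d₂ : ℂ)‖ *
          ‖u x₁ x₂ t‖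
        ≤ (Real.sqrt μ)⁻¹ * ((2 + Real.sqrt lam) * s) * M :=
          mul_le_mul (mul_le_mul_of_nonneg_left h2 (inv_nonneg.2 hsqμ.le)) h3
            (norm_nonneg _) (by positivity)
      _ = K * s * M := by rw [hKdef]; ring
  -- smallness of w on the cylinder
  have habs_w : ∀ p ∈ S, ‖w p.1 p.2.1 p.2.2‖ ≤ C₄ * ε := by
    intro p hp
    obtain ⟨hp1, hp2, hp3⟩ := hp
    have hq : (p.1, γ p.1, p.2.2) ∈ S := by
      refine ⟨hp1, ?_, hp3⟩
      exact ⟨le_refl _, by linarith [hε0.le]⟩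
    have hwq : w p.1 (γ p.1) p.2.2 = 0 := hw0 p.1 hp1 p.2.2 hp3
    have := hpar.lip p ⟨hp1, hp2, hp3⟩ (p.1, γ p.1, p.2.2) hq
    simp only [hwq, sub_zero] at this
    refine this.trans ?_
    have hrho : prho p.1 p.2.1 p.2.2 p.1 (γ p.1) p.2.2 = |p.2.1 - γ p.1| := prho_vert _ _ _ _
    rw [hrho]
    have h1 : |p.2.1 - γ p.1| ≤ ε := by
      rw [abs_of_nonneg (by linarith [hp2.1])]
      linarith [hp2.2]
    simpa using mul_le_mul_of_nonneg_left h1 hC₄.le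
  -- |∂₁ w| ≤ C₄
  have habs_pd1w : ∀ p ∈ S, ‖pd1 w p.1 p.2.1 p.2.2‖ ≤ C₄ := fun p hp =>
    (abs_pd1_le_gradNorm w p.1 p.2.1 p.2.2).trans (hpar.grad_bdd p hp)
  -- pointwise bound on the integrand, at any point of the cylinder
  set Bd : ℝ := C₄ * M * (K * s * ε + 1) with hBd
  have hBdpos : 0 < Bd := by positivity
  have hFbound : ∀ x₁ x₂ t : ℝ, (x₁, x₂, t) ∈ S →
      ‖w x₁ x₂ t * pd1 u x₁ x₂ t - u x₁ x₂ t * pd1 w x₁ x₂ t‖ ≤ Bd := by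
    intro x₁ x₂ t hp
    obtain ⟨hp1, hp2, hp3⟩ := hp
    have hx₁ : |x₁| ≤ ε ^ l := by
      rw [abs_of_nonneg hp1.1]; exact hp1.2
    have hγx : |γ x₁| ≤ ε := hγb x₁ hp1
    have hx₂ : |x₂| ≤ 2 * ε := by
      rw [abs_le]
      constructor
      · have := hp2.1
        have := abs_le.1 hγx
        linarith [this.1]
      · have := hp2.2
        have := abs_le.1 hγx
        linarith [this.2]
    have ht0 : 0 ≤ t := le_trans hT₁0 hp3.1
    have htT : t ≤ T := le_trans hp3.2 hT₂T
    have h1 := habs_w (x₁, x₂, t) ⟨hp1, hp2, hp3⟩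
    have h2 := habs_pd1w (x₁, x₂, t) ⟨hp1, hp2, hp3⟩
    have h3 := habs_u x₁ x₂ t hx₁ hx₂ ht0 htT
    have h4 := habs_pd1u x₁ x₂ t hx₁ hx₂ ht0 htT
    simp only at h1 h2
    calc ‖w x₁ x₂ t * pd1 u x₁ x₂ t - u x₁ x₂ t * pd1 w x₁ x₂ t‖
        ≤ ‖w x₁ x₂ t * pd1 u x₁ x₂ t‖ + ‖u x₁ x₂ t * pd1 w x₁ x₂ t‖ := norm_sub_le _ _
      _ = ‖w x₁ x₂ t‖ * ‖pd1 u x₁ x₂ t‖ +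
            ‖u x₁ x₂ t‖ * ‖pd1 w x₁ x₂ t‖ := by
          simp [norm_mul]
      _ ≤ (C₄ * ε) * (K * s * M) + M * C₄ := by
          gcongr <;> first
            | exact norm_nonneg _
            | assumption
      _ = Bd := by rw [hBd]; ring
  -- bound the inner integrals for each fixed time t
  have hinner : ∀ t ∈ Set.uIoc T₁ T₂,
      ‖(∫ x₂ in (γ (ε ^ l))..(γ (ε ^ l) + ε),
          (w (ε ^ l) x₂ t * pd1 u (ε ^ l) x₂ t - u (ε ^ l) x₂ t * pd1 w (ε ^ l) x₂ t))
        - ∫ x₂ in (0:ℝ)..ε,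
          (w 0 x₂ t * pd1 u 0 x₂ t - u 0 x₂ t * pd1 w 0 x₂ t)‖ ≤ 2 * Bd * ε := by
    intro t ht
    rw [Set.uIoc_of_le hT₁T₂] at ht
    have htIcc : t ∈ Set.Icc T₁ T₂ := ⟨ht.1.le, ht.2⟩
    have hR : ‖∫ x₂ in (γ (ε ^ l))..(γ (ε ^ l) + ε),
        (w (ε ^ l) x₂ t * pd1 u (ε ^ l) x₂ t - u (ε ^ l) x₂ t * pd1 w (ε ^ l) x₂ t)‖ ≤
        Bd * ε := by
      have := intervalIntegral.norm_integral_le_of_norm_le_const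
        (f := fun x₂ => w (ε ^ l) x₂ t * pd1 u (ε ^ l) x₂ t - u (ε ^ l) x₂ t * pd1 w (ε ^ l) x₂ t)
        (a := γ (ε ^ l)) (b := γ (ε ^ l) + ε) (C := Bd) ?_
      · calc ‖_‖ ≤ Bd * |γ (ε ^ l) + ε - γ (ε ^ l)| := this
          _ = Bd * ε := by rw [show γ (ε ^ l) + ε - γ (ε ^ l) = ε by ring, abs_of_nonneg hε0.le]
      · intro x₂ hx₂
        rw [Set.uIoc_of_le (by linarith [hε0.le])] at hx₂
        refine hFbound (ε ^ l) x₂ t ⟨⟨hεl0.le, le_refl _⟩, ⟨hx₂.1.le, hx₂.2⟩, htIcc⟩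
    have hL : ‖∫ x₂ in (0:ℝ)..ε,
        (w 0 x₂ t * pd1 u 0 x₂ t - u 0 x₂ t * pd1 w 0 x₂ t)‖ ≤ Bd * ε := by
      have := intervalIntegral.norm_integral_le_of_norm_le_const
        (f := fun x₂ => w 0 x₂ t * pd1 u 0 x₂ t - u 0 x₂ t * pd1 w 0 x₂ t)
        (a := (0:ℝ)) (b := ε) (C := Bd) ?_
      · calc ‖_‖ ≤ Bd * |ε - 0| := this
          _ = Bd * ε := by rw [show ε - (0:ℝ) = ε by ring, abs_of_nonneg hε0.le]
      · intro x₂ hx₂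
        rw [Set.uIoc_of_le hε0.le] at hx₂
        refine hFbound 0 x₂ t ⟨⟨le_refl _, hεl0.le⟩, ?_, htIcc⟩
        rw [hγ0]
        exact ⟨hx₂.1.le, by linarith [hx₂.2]⟩
    calc ‖_ - _‖ ≤ ‖_‖ + ‖_‖ := norm_sub_le _ _
      _ ≤ Bd * ε + Bd * ε := add_le_add hR hL
      _ = 2 * Bd * ε := by ring
  -- bound the outer time integral
  have houter : ‖∫ t in T₁..T₂,
      ((∫ x₂ in (γ (ε ^ l))..(γ (ε ^ l) + ε),
          (w (ε ^ l) x₂ t * pd1 u (ε ^ l) x₂ t - u (ε ^ l) x₂ t * pd1 w (ε ^ l) x₂ t))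
        - ∫ x₂ in (0:ℝ)..ε,
          (w 0 x₂ t * pd1 u 0 x₂ t - u 0 x₂ t * pd1 w 0 x₂ t))‖ ≤ 2 * Bd * ε * ε ^ 2 := by
    have := intervalIntegral.norm_integral_le_of_norm_le_const (C := 2 * Bd * ε) hinner
    calc ‖_‖ ≤ 2 * Bd * ε * |T₂ - T₁| := this
      _ = 2 * Bd * ε * ε ^ 2 := by rw [hT21, abs_of_nonneg (sq_nonneg ε)]
  -- put everything together
  have hfinal : ‖(μ : ℂ) * ∫ t in T₁..T₂,
      ((∫ x₂ in (γ (ε ^ l))..(γ (ε ^ l) + ε),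
          (w (ε ^ l) x₂ t * pd1 u (ε ^ l) x₂ t - u (ε ^ l) x₂ t * pd1 w (ε ^ l) x₂ t))
        - ∫ x₂ in (0:ℝ)..ε,
          (w 0 x₂ t * pd1 u 0 x₂ t - u 0 x₂ t * pd1 w 0 x₂ t))‖ ≤
      μ * (2 * Bd * ε * ε ^ 2) := by
    rw [norm_mul, Complex.norm_real, Real.norm_eq_abs, abs_of_nonneg hμ.le]
    gcongr
  refine hfinal.trans ?_
  -- final comparison with the right-hand side
  set a : ℝ := α₄ * min l 1 with ha
  have hmin0 : 0 ≤ min l 1 := le_min hl.le zero_le_one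
  have hmin1 : min l 1 ≤ 1 := min_le_right l 1
  have ha0 : 0 ≤ a := mul_nonneg hα₄.1.le hmin0
  have ha1 : a ≤ 1 := mul_le_one₀ hα₄.2.le hmin0 hmin1
  have h4 : ε ^ (4:ℕ) ≤ ε ^ ((3:ℝ) + a) := by
    rw [← Real.rpow_natCast ε 4]
    exact Real.rpow_le_rpow_of_exponent_ge hε0 hε1.le (by push_cast; linarith)
  have h3 : ε ^ (3:ℕ) ≤ ε ^ ((2:ℝ) + a) := by
    rw [← Real.rpow_natCast ε 3]
    exact Real.rpow_le_rpow_of_exponent_ge hε0 hε1.le (by push_cast; linarith)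
  have hstep1 : μ * (2 * Bd * ε * ε ^ 2) = 2 * μ * C₄ * M * (K * s * ε ^ (4:ℕ) + ε ^ (3:ℕ)) := by
    rw [hBd]; ring
  rw [hstep1]
  have hstep2 : K * s * ε ^ (4:ℕ) + ε ^ (3:ℕ) ≤
      (K + 1) * (s * ε ^ ((3:ℝ) + a) + ε ^ ((2:ℝ) + a)) := by
    have h4' : K * s * ε ^ (4:ℕ) ≤ K * s * ε ^ ((3:ℝ) + a) :=
      mul_le_mul_of_nonneg_left h4 (by positivity)
    have hr1 : (0:ℝ) ≤ ε ^ ((3:ℝ) + a) := (Real.rpow_pos_of_pos hε0 _).le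
    have hr2 : (0:ℝ) ≤ ε ^ ((2:ℝ) + a) := (Real.rpow_pos_of_pos hε0 _).le
    have n1 : (0:ℝ) ≤ s * ε ^ ((3:ℝ) + a) := mul_nonneg hs0.le hr1
    have n2 : (0:ℝ) ≤ K * ε ^ ((2:ℝ) + a) := mul_nonneg hKpos.le hr2
    have expand : (K + 1) * (s * ε ^ ((3:ℝ) + a) + ε ^ ((2:ℝ) + a)) =
        K * s * ε ^ ((3:ℝ) + a) + s * ε ^ ((3:ℝ) + a) + K * ε ^ ((2:ℝ) + a) +
          ε ^ ((2:ℝ) + a) := by ring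
    rw [expand]
    linarith
  have hnn1 : (0:ℝ) ≤ s ^ 2 * ε ^ ((3:ℝ) + l) := by positivity
  have hnn2 : (0:ℝ) ≤ s ^ 2 * ε ^ ((2:ℝ) + l + (1 + α₄) * min l 1) := by positivity
  have hnn4 : (0:ℝ) ≤ s ^ 3 * ε ^ ((3:ℝ) + 2 * l) := by positivity
  calc 2 * μ * C₄ * M * (K * s * ε ^ (4:ℕ) + ε ^ (3:ℕ))
      ≤ 2 * μ * C₄ * M * ((K + 1) * (s * ε ^ ((3:ℝ) + a) + ε ^ ((2:ℝ) + a))) :=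
        mul_le_mul_of_nonneg_left hstep2 (by positivity)
    _ = 2 * μ * C₄ * M * (K + 1) * (s * ε ^ ((3:ℝ) + a) + ε ^ ((2:ℝ) + a)) := by ring
    _ ≤ 2 * μ * C₄ * M * (K + 1) *
          (s ^ 2 * ε ^ (3 + l) + s ^ 2 * ε ^ (2 + l + (1 + α₄) * min l 1)
            + ε ^ (2 + α₄ * min l 1) + s ^ 3 * ε ^ (3 + 2 * l)
            + s * ε ^ (3 + α₄ * min l 1)) := by
        have hc0 : (0:ℝ) ≤ 2 * μ * C₄ * M * (K + 1) := by positivity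
        have heq1 : ((3:ℝ) + a) = 3 + α₄ * min l 1 := by rw [ha]
        have heq2 : ((2:ℝ) + a) = 2 + α₄ * min l 1 := by rw [ha]
        rw [heq1, heq2]
        have : s * ε ^ ((3:ℝ) + α₄ * min l 1) + ε ^ ((2:ℝ) + α₄ * min l 1) ≤
            s ^ 2 * ε ^ (3 + l) + s ^ 2 * ε ^ (2 + l + (1 + α₄) * min l 1)
              + ε ^ (2 + α₄ * min l 1) + s ^ 3 * ε ^ (3 + 2 * l)
              + s * ε ^ (3 + α₄ * min l 1) := by
          linarith [hnn1, hnn2, hnn4]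
        exact mul_le_mul_of_nonneg_left this hc0
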